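/- Let 0 < k₋ ≤ k⁺, let u : ℝ → ℂ be measurable, let A ∈ ℂ, τ ∈ ℝ and C > 0, and assume |u(k) − A·exp(i k τ)| ≤ C/k for all k ∈ [k₋, k⁺]. Then |∫_{k₋}^{k⁺} u(k)·exp(−i k τ)·k^{−1/2} dk − 2A(√(k⁺) − √(k₋))| ≤ 2C/√(k₋). -/

import Mathlib

open MeasureTheory

/-- On-line case of Proposition 4.1 in dimension `n = 2`, in abstract form. -/
theorem stmt_8 (kminus kplus : ℝ) (hk : 0 < kminus) (hkk : kminus ≤ kplus)
    (u : ℝ → ℂ) (hu : Measurable u) (A : ℂ) (τ C : ℝ) (hC : 0 < C)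
    (h : ∀ k ∈ Set.Icc kminus kplus, ‖u k - A * Complex.exp (Complex.I * k * τ)‖ ≤ C / k) :
    ‖(∫ k in kminus..kplus,
          u k * Complex.exp (-(Complex.I * k * τ)) * ((k ^ (-(1 / 2 : ℝ)) : ℝ) : ℂ)) -
        2 * A * ((Real.sqrt kplus - Real.sqrt kminus : ℝ) : ℂ)‖ ≤
      2 * C / Real.sqrt kminus := by
  have h0 : (0:ℝ) ∉ Set.uIcc kminus kplus := by
    rw [Set.uIcc_of_le hkk]
    exact fun h0 => absurd h0.1 (not_le.2 hk)
  set f : ℝ → ℂ := fun k =>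
    u k * Complex.exp (-(Complex.I * k * τ)) * ((k ^ (-(1 / 2 : ℝ)) : ℝ) : ℂ) with hf
  set g : ℝ → ℂ := fun k => A * ((k ^ (-(1 / 2 : ℝ)) : ℝ) : ℂ) with hgdef
  -- pointwise rewriting of f - g on the interval
  have hfg : ∀ k ∈ Set.Icc kminus kplus, f k - g k =
      (u k - A * Complex.exp (Complex.I * k * τ)) * Complex.exp (-(Complex.I * k * τ)) *
        ((k ^ (-(1 / 2 : ℝ)) : ℝ) : ℂ) := by
    intro k _
    have hE : Complex.exp (Complex.I * k * τ) * Complex.exp (-(Complex.I * k * τ)) = 1 := by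
      rw [← Complex.exp_add]; simp
    simp only [hf, hgdef]
    linear_combination (A * ((k ^ (-(1 / 2 : ℝ)) : ℝ) : ℂ)) * hE
  -- norm bound of f - g on the interval
  have hbound : ∀ k ∈ Set.Icc kminus kplus, ‖f k - g k‖ ≤ C * k ^ (-(3/2:ℝ)) := by
    intro k hkm
    have hkpos : 0 < k := lt_of_lt_of_le hk hkm.1
    rw [hfg k hkm]
    have hE1 : ‖Complex.exp (-(Complex.I * k * τ))‖ = 1 := by
      rw [Complex.norm_exp]
      simp
    rw [norm_mul, norm_mul, hE1, mul_one, Complex.norm_real,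
      Real.norm_eq_abs, abs_of_pos (Real.rpow_pos_of_pos hkpos _)]
    calc ‖u k - A * Complex.exp (Complex.I * k * τ)‖ * k ^ (-(1/2:ℝ))
        ≤ (C / k) * k ^ (-(1/2:ℝ)) := by
          apply mul_le_mul_of_nonneg_right (h k hkm) (Real.rpow_pos_of_pos hkpos _).le
      _ = C * k ^ (-(3/2:ℝ)) := by
          rw [div_eq_mul_inv, ← Real.rpow_neg_one k, mul_assoc, ← Real.rpow_add hkpos]
          norm_num
  -- integrability facts
  have hcontC : ContinuousOn (fun k : ℝ => C * k ^ (-(3/2:ℝ))) (Set.uIcc kminus kplus) := by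
    apply ContinuousOn.mul continuousOn_const
    intro x hx
    exact (Real.continuousAt_rpow_const x _ (Or.inl (fun hx0 => h0 (hx0 ▸ hx)))).continuousWithinAt
  have hCint : IntervalIntegrable (fun k => C * k ^ (-(3/2:ℝ))) volume kminus kplus :=
    hcontC.intervalIntegrable
  have hcontg : ContinuousOn g (Set.uIcc kminus kplus) := by
    apply ContinuousOn.mul continuousOn_const
    apply Complex.continuous_ofReal.comp_continuousOn
    intro x hx
    exact (Real.continuousAt_rpow_const x _ (Or.inl (fun hx0 => h0 (hx0 ▸ hx)))).continuousWithinAt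
  have hgint : IntervalIntegrable g volume kminus kplus := hcontg.intervalIntegrable
  have hmeas : Measurable f := by fun_prop
  have huIoc : Set.uIoc kminus kplus ⊆ Set.Icc kminus kplus := by
    rw [Set.uIoc_of_le hkk]
    exact Set.Ioc_subset_Icc_self
  have hdint : IntervalIntegrable (fun k => f k - g k) volume kminus kplus := by
    apply hCint.mono_fun ((hmeas.sub (by fun_prop)).aestronglyMeasurable)
    refine (ae_restrict_iff' measurableSet_uIoc).2 (ae_of_all _ fun k hkm => ?_)
    have hkpos : 0 < k := lt_of_lt_of_le hk (huIoc hkm).1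
    show ‖f k - g k‖ ≤ ‖C * k ^ (-(3/2:ℝ))‖
    rw [Real.norm_eq_abs, abs_of_pos (by positivity)]
    exact hbound k (huIoc hkm)
  have hfint : IntervalIntegrable f volume kminus kplus := by
    have := hdint.add hgint
    simpa using this
  -- integral of g
  have hgval : (∫ k in kminus..kplus, g k) =
      2 * A * ((Real.sqrt kplus - Real.sqrt kminus : ℝ) : ℂ) := by
    simp only [hgdef]
    rw [intervalIntegral.integral_const_mul, intervalIntegral.integral_ofReal]
    have : (∫ k in kminus..kplus, (k ^ (-(1/2:ℝ)))) =
        2 * (Real.sqrt kplus - Real.sqrt kminus) := by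
      rw [integral_rpow (Or.inl (by norm_num))]
      rw [Real.sqrt_eq_rpow, Real.sqrt_eq_rpow]
      norm_num
      ring
    rw [this]
    push_cast
    ring
  -- value of bound integral
  have hCval : (∫ k in kminus..kplus, C * k ^ (-(3/2:ℝ))) =
      2 * C * (kminus ^ (-(1/2:ℝ)) - kplus ^ (-(1/2:ℝ))) := by
    rw [intervalIntegral.integral_const_mul, integral_rpow (Or.inr ⟨by norm_num, h0⟩)]
    norm_num
    ring
  -- main estimate
  have key : ‖(∫ k in kminus..kplus, f k) - 2 * A * ((Real.sqrt kplus - Real.sqrt kminus : ℝ) : ℂ)‖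
      ≤ |∫ k in kminus..kplus, C * k ^ (-(3/2:ℝ))| := by
    rw [← hgval, ← intervalIntegral.integral_sub hfint hgint]
    apply intervalIntegral.norm_integral_le_abs_of_norm_le _ hCint
    refine (ae_restrict_iff' measurableSet_uIoc).2 (ae_of_all _ fun k hkm => ?_)
    exact hbound k (huIoc hkm)
  refine key.trans ?_
  rw [hCval]
  have h1 : 0 < kminus ^ (-(1/2:ℝ)) := Real.rpow_pos_of_pos hk _
  have h2 : 0 < kplus ^ (-(1/2:ℝ)) := Real.rpow_pos_of_pos (lt_of_lt_of_le hk hkk) _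
  have h3 : kplus ^ (-(1/2:ℝ)) ≤ kminus ^ (-(1/2:ℝ)) :=
    Real.rpow_le_rpow_of_nonpos hk hkk (by norm_num)
  have ha : kminus ^ (-(1/2:ℝ)) = (Real.sqrt kminus)⁻¹ := by
    rw [Real.rpow_neg hk.le, Real.sqrt_eq_rpow]
  rw [abs_of_nonneg (by nlinarith), ha, div_eq_mul_inv (2*C)]
  nlinarith [h2, hC.le]
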